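/- Let T be a real random variable on a probability space, let b₁, b₂, b₃ > 0, and let q > 0 be real. Suppose that for every x > 0, P(|T| ≥ x) ≤ 6 · exp( − min( b₁ x², b₂ x, b₃ √x ) ). Then E[ |T|^{2q} ] ≤ 12 q ( Γ(q) / (2 b₁^q) + Γ(2q) / b₂^{2q} + 2 Γ(4q) / b₃^{4q} ), where Γ denotes the Gamma function. -/

import Mathlib

open MeasureTheory

open Real Set

lemma aux_integrableOn {s p b : ℝ} (hs : -1 < s) (hp : 0 < p) (hb : 0 < b) :
    IntegrableOn (fun t : ℝ => t ^ s * Real.exp (-b * t ^ p)) (Set.Ioi 0) := by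
  have hsp : 0 < (s + 1) / p := div_pos (by linarith) hp
  have h1 : IntegrableOn (fun u : ℝ => u ^ ((s+1)/p - 1) * Real.exp (-b * u ^ (1:ℝ)))
      (Ioi 0) := integrableOn_rpow_mul_exp_neg_mul_rpow (by linarith) one_pos hb
  have h1' : IntegrableOn (fun u : ℝ => u ^ ((s+1)/p - 1) * Real.exp (-b * u)) (Ioi 0) := by
    simpa using h1
  have h2 := (integrableOn_Ioi_comp_rpow_iff'
      (fun u : ℝ => u ^ ((s+1)/p - 1) * Real.exp (-b * u)) hp.ne').mpr h1'
  refine h2.congr_fun ?_ measurableSet_Ioi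
  intro x hx
  have hx0 : (0:ℝ) < x := hx
  simp only [smul_eq_mul]
  rw [← Real.rpow_mul hx0.le, ← mul_assoc, ← Real.rpow_add hx0]
  congr 2
  field_simp
  ring


/-- If a real random variable `T` satisfies the tail bound
`P(|T| ≥ x) ≤ 6 exp(−min(b₁x², b₂x, b₃√x))` for all `x > 0`, then
`E[|T|^{2q}] ≤ 12q (Γ(q)/(2b₁^q) + Γ(2q)/b₂^{2q} + 2Γ(4q)/b₃^{4q})`. -/
theorem stmt_15
    {Ω : Type*} [MeasurableSpace Ω] (P : Measure Ω) [IsProbabilityMeasure P]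
    (T : Ω → ℝ) (hT : Measurable T)
    (b₁ b₂ b₃ : ℝ) (hb₁ : 0 < b₁) (hb₂ : 0 < b₂) (hb₃ : 0 < b₃)
    (q : ℝ) (hq : 0 < q)
    (htail : ∀ x : ℝ, 0 < x →
      P {ω | x ≤ |T ω|}
        ≤ ENNReal.ofReal (6 * Real.exp (-(min (b₁ * x ^ 2) (min (b₂ * x) (b₃ * Real.sqrt x)))))) :
    ∫ ω, |T ω| ^ (2 * q) ∂P
      ≤ 12 * q * (Real.Gamma q / (2 * b₁ ^ q)
          + Real.Gamma (2 * q) / b₂ ^ (2 * q)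
          + 2 * Real.Gamma (4 * q) / b₃ ^ (4 * q)) := by
  have h2q : (0:ℝ) < 2 * q := by linarith
  have hr1 : (-1:ℝ) < 2 * q - 1 := by linarith
  -- value of the model integrals
  have key : ∀ b p : ℝ, 0 < b → 0 < p →
      ∫⁻ t in Ioi (0:ℝ), ENNReal.ofReal (6 * (t ^ (2*q-1) * Real.exp (-b * t ^ p)))
        = ENNReal.ofReal (6 * (b ^ (-(2*q)/p) * (1/p) * Real.Gamma (2*q/p))) := by
    intro b p hb hp
    rw [← ofReal_integral_eq_lintegral_ofReal
        ((aux_integrableOn hr1 hp hb).const_mul 6)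
        (by filter_upwards [self_mem_ae_restrict measurableSet_Ioi] with t ht
            have ht0 : (0:ℝ) < t := ht
            positivity)]
    congr 1
    rw [MeasureTheory.integral_const_mul, integral_rpow_mul_exp_neg_mul_rpow hp hr1 hb,
      show 2*q - 1 + 1 = 2*q by ring]
  -- layer cake
  have habs_nn : 0 ≤ᵐ[P] fun ω => |T ω| := Filter.Eventually.of_forall fun ω => abs_nonneg _
  have hLC := lintegral_rpow_eq_lintegral_meas_le_mul P habs_nn hT.abs.aemeasurable h2q
  -- pointwise tail bound
  have hpt : ∀ t ∈ Ioi (0:ℝ),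
      P {a | t ≤ |T a|} * ENNReal.ofReal (t ^ (2*q-1))
        ≤ ENNReal.ofReal (6 * (t ^ (2*q-1) * Real.exp (-b₁ * t ^ (2:ℝ))))
          + (ENNReal.ofReal (6 * (t ^ (2*q-1) * Real.exp (-b₂ * t ^ (1:ℝ))))
          + ENNReal.ofReal (6 * (t ^ (2*q-1) * Real.exp (-b₃ * t ^ ((1:ℝ)/2))))) := by
    intro t ht
    have ht0 : (0:ℝ) < t := ht
    have h1 : P {a | t ≤ |T a|} * ENNReal.ofReal (t ^ (2*q-1))
        ≤ ENNReal.ofReal (6 * Real.exp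
            (-(min (b₁ * t ^ 2) (min (b₂ * t) (b₃ * Real.sqrt t)))) * t ^ (2*q-1)) := by
      rw [ENNReal.ofReal_mul (by positivity)]
      exact mul_le_mul_of_nonneg_right (htail t ht0) (by simp)
    refine h1.trans ?_
    rw [← ENNReal.ofReal_add (by positivity) (by positivity),
        ← ENNReal.ofReal_add (by positivity) (by positivity)]
    apply ENNReal.ofReal_le_ofReal
    have e2 : t ^ (2:ℝ) = t ^ 2 := by
      rw [show ((2:ℝ)) = ((2:ℕ):ℝ) by norm_num, Real.rpow_natCast]
    have e1 : t ^ (1:ℝ) = t := Real.rpow_one t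
    have e3 : t ^ ((1:ℝ)/2) = Real.sqrt t := (Real.sqrt_eq_rpow t).symm
    rw [e2, e1, e3]
    set A := b₁ * t ^ 2
    set B := b₂ * t
    set C := b₃ * Real.sqrt t
    have hmin : Real.exp (-(min A (min B C)))
        ≤ Real.exp (-A) + Real.exp (-B) + Real.exp (-C) := by
      rcases le_total A (min B C) with h | h
      · rw [min_eq_left h]
        have := Real.exp_pos (-B); have := Real.exp_pos (-C); linarith
      · rw [min_eq_right h]
        rcases le_total B C with h' | h'
        · rw [min_eq_left h']
          have := Real.exp_pos (-A); have := Real.exp_pos (-C); linarith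
        · rw [min_eq_right h']
          have := Real.exp_pos (-A); have := Real.exp_pos (-B); linarith
    have hpow : (0:ℝ) ≤ t ^ (2*q-1) := Real.rpow_nonneg ht0.le _
    have hmul := mul_le_mul_of_nonneg_left hmin (by positivity : (0:ℝ) ≤ 6 * t ^ (2*q-1))
    simp only [neg_mul]
    nlinarith [hmul]
  -- combine
  have hmeas2 : AEMeasurable (fun t => ENNReal.ofReal
      (6 * (t ^ (2*q-1) * Real.exp (-b₂ * t ^ (1:ℝ))))) (volume.restrict (Ioi 0)) :=
    (((aux_integrableOn hr1 one_pos hb₂).const_mul 6).aemeasurable).ennreal_ofReal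
  have hmeas3 : AEMeasurable (fun t => ENNReal.ofReal
      (6 * (t ^ (2*q-1) * Real.exp (-b₃ * t ^ ((1:ℝ)/2))))) (volume.restrict (Ioi 0)) :=
    (((aux_integrableOn hr1 (by norm_num) hb₃).const_mul 6).aemeasurable).ennreal_ofReal
  have hbound : ∫⁻ ω, ENNReal.ofReal (|T ω| ^ (2*q)) ∂P
      ≤ ENNReal.ofReal (2*q) *
        (ENNReal.ofReal (6 * (b₁ ^ (-(2*q)/2) * (1/2) * Real.Gamma (2*q/2)))
        + ENNReal.ofReal (6 * (b₂ ^ (-(2*q)/1) * (1/1) * Real.Gamma (2*q/1)))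
        + ENNReal.ofReal (6 * (b₃ ^ (-(2*q)/(1/2)) * (1/(1/2)) * Real.Gamma (2*q/(1/2))))) := by
    rw [hLC]
    refine mul_le_mul_of_nonneg_left ?_ (by simp)
    calc ∫⁻ t in Ioi (0:ℝ), P {a | t ≤ |T a|} * ENNReal.ofReal (t ^ (2*q-1))
        ≤ ∫⁻ t in Ioi (0:ℝ),
            (ENNReal.ofReal (6 * (t ^ (2*q-1) * Real.exp (-b₁ * t ^ (2:ℝ))))
            + (ENNReal.ofReal (6 * (t ^ (2*q-1) * Real.exp (-b₂ * t ^ (1:ℝ))))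
            + ENNReal.ofReal (6 * (t ^ (2*q-1) * Real.exp (-b₃ * t ^ ((1:ℝ)/2)))))) := by
          refine lintegral_mono_ae ?_
          filter_upwards [self_mem_ae_restrict measurableSet_Ioi] with t ht
          exact hpt t ht
      _ = ENNReal.ofReal (6 * (b₁ ^ (-(2*q)/2) * (1/2) * Real.Gamma (2*q/2)))
            + ENNReal.ofReal (6 * (b₂ ^ (-(2*q)/1) * (1/1) * Real.Gamma (2*q/1)))
            + ENNReal.ofReal (6 * (b₃ ^ (-(2*q)/(1/2)) * (1/(1/2)) * Real.Gamma (2*q/(1/2)))) := by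
          rw [lintegral_add_right' _ (by exact hmeas2.add hmeas3), lintegral_add_right' _ hmeas3,
            key b₁ 2 hb₁ two_pos, key b₂ 1 hb₂ one_pos, key b₃ (1/2) hb₃ (by norm_num),
            add_assoc]
  -- conclude
  have hnn : 0 ≤ᵐ[P] fun ω => |T ω| ^ (2*q) :=
    Filter.Eventually.of_forall fun ω => Real.rpow_nonneg (abs_nonneg _) _
  have hsm : AEStronglyMeasurable (fun ω => |T ω| ^ (2*q)) P :=
    ((Real.continuous_rpow_const h2q.le).measurable.comp hT.abs).aestronglyMeasurable
  rw [integral_eq_lintegral_of_nonneg_ae hnn hsm]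
  have hC : (0:ℝ) ≤ 12 * q * (Real.Gamma q / (2 * b₁ ^ q)
      + Real.Gamma (2 * q) / b₂ ^ (2 * q) + 2 * Real.Gamma (4 * q) / b₃ ^ (4 * q)) := by
    positivity
  refine ENNReal.toReal_le_of_le_ofReal hC (hbound.trans ?_)
  rw [← ENNReal.ofReal_add (by positivity) (by positivity),
      ← ENNReal.ofReal_add (by positivity) (by positivity),
      ← ENNReal.ofReal_mul h2q.le]
  apply ENNReal.ofReal_le_ofReal
  rw [show 2*q/2 = q by ring, show 2*q/1 = 2*q by ring, show 2*q/(1/2:ℝ) = 4*q by ring,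
      show -(2*q)/2 = -q by ring, show -(2*q)/1 = -(2*q) by ring,
      show -(2*q)/(1/2:ℝ) = -(4*q) by ring,
      Real.rpow_neg hb₁.le, Real.rpow_neg hb₂.le, Real.rpow_neg hb₃.le]
  have h1 : (0:ℝ) < b₁ ^ q := Real.rpow_pos_of_pos hb₁ _
  have h2 : (0:ℝ) < b₂ ^ (2*q) := Real.rpow_pos_of_pos hb₂ _
  have h3 : (0:ℝ) < b₃ ^ (4*q) := Real.rpow_pos_of_pos hb₃ _
  rw [div_add_div _ _ (by positivity) (by positivity)]
  field_simp
  ring_nf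
  exact le_rfl
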